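/- arXiv:2511.01335 — 2 statements merged into one kernel-verified Lean document; each statement's English description precedes it below -/
import Mathlib

section
/- There exists a constant C > 0 such that for all real s ≥ 0 and all β > 0: β (s ln s − s² ln s) ≤ −(β/2) s² ln(2+s) + C β, where by convention s ln s = 0 at s = 0. -/
lemma key_entropy_bound (s : ℝ) (hs : 0 ≤ s) :
    s * Real.log s - s ^ 2 * Real.log s + (1/2) * s ^ 2 * Real.log (2 + s)
      ≤ 2 * Real.exp 8 := by
  have hexp : (9:ℝ) ≤ Real.exp 8 := by linarith [Real.add_one_le_exp (8:ℝ)]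
  rcases le_or_gt s 1 with h1 | h1
  · have hls : Real.log s ≤ 0 := Real.log_nonpos hs h1
    have hterm1 : s * Real.log s - s ^ 2 * Real.log s ≤ 0 := by
      nlinarith [mul_nonneg hs (by linarith : (0:ℝ) ≤ 1 - s)]
    have hl3 : Real.log (2 + s) ≤ Real.log 3 :=
      Real.log_le_log (by linarith) (by linarith)
    have hlog3 : Real.log 3 ≤ 2 := by linarith [Real.log_le_sub_one_of_pos (by norm_num : (0:ℝ) < 3)]
    have hln : 0 ≤ Real.log (2 + s) := Real.log_nonneg (by linarith)
    have hsq : s ^ 2 ≤ 1 := by nlinarith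
    nlinarith [sq_nonneg s]
  · -- s > 1
    have hls : 0 ≤ Real.log s := Real.log_nonneg h1.le
    have hlog2s : Real.log (2 + s) ≤ Real.log s + 2 := by
      have h1' : Real.log (2 + s) ≤ Real.log (3 * s) :=
        Real.log_le_log (by linarith) (by linarith)
      rw [Real.log_mul (by norm_num) (by linarith)] at h1'
      have hlog3 : Real.log 3 ≤ 2 := by
        linarith [Real.log_le_sub_one_of_pos (by norm_num : (0:ℝ) < 3)]
      linarith
    have hlss : Real.log s ≤ s := by
      linarith [Real.log_le_sub_one_of_pos (by linarith : (0:ℝ) < s)]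
    -- f ≤ 2 s² − ½ s² log s
    have hmain : s * Real.log s - s ^ 2 * Real.log s + (1/2) * s ^ 2 * Real.log (2 + s)
        ≤ 2 * s ^ 2 - (1/2) * s ^ 2 * Real.log s := by
      have hsq : 0 ≤ s ^ 2 := sq_nonneg s
      have h2 : (1/2) * s ^ 2 * Real.log (2 + s) ≤ (1/2) * s ^ 2 * (Real.log s + 2) := by
        nlinarith
      have h3 : s * Real.log s ≤ s ^ 2 := by nlinarith
      nlinarith
    rcases le_or_gt 4 (Real.log s) with h4 | h4
    · have : 2 * s ^ 2 - (1/2) * s ^ 2 * Real.log s ≤ 0 := by nlinarith [sq_nonneg s]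
      nlinarith [Real.exp_pos (8:ℝ)]
    · have hse : s < Real.exp 4 := by
        calc s = Real.exp (Real.log s) := (Real.exp_log (by linarith)).symm
        _ < Real.exp 4 := Real.exp_lt_exp.mpr h4
      have hs2 : s ^ 2 ≤ Real.exp 8 := by
        have : Real.exp 4 * Real.exp 4 = Real.exp 8 := by
          rw [← Real.exp_add]; norm_num
        nlinarith [Real.exp_pos (4:ℝ)]
      nlinarith [sq_nonneg s, mul_nonneg (sq_nonneg s) hls]

theorem logistic_entropy_production_bound :
    ∃ C : ℝ, 0 < C ∧ ∀ s : ℝ, 0 ≤ s → ∀ β : ℝ, 0 < β →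
      β * (s * Real.log s - s ^ 2 * Real.log s)
        ≤ -(β / 2) * s ^ 2 * Real.log (2 + s) + C * β := by
  refine ⟨2 * Real.exp 8, by positivity, fun s hs β hβ => ?_⟩
  have hkey := key_entropy_bound s hs
  nlinarith [mul_le_mul_of_nonneg_left hkey hβ.le]
end

section
/- Let y : [0,∞) → [0,∞) be absolutely continuous, ϱ > 0, and h ∈ L¹_loc([0,∞)) nonnegative with the property that ∫_t^{t+1} h(s) ds ≤ H for all t ≥ 0. If y'(t) + ϱ y(t) ≤ h(t) for a.e. t ≥ 0, then y(t) ≤ y(0) e^{-ϱ t} + H · (1 + 1/(1 − e^{-ϱ})) for all t ≥ 0; in particular y is bounded on [0,∞). -/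
open MeasureTheory intervalIntegral Real Set

lemma key_bound (ϱ H : ℝ) (hϱ : 0 < ϱ) (hH : 0 ≤ H) (h : ℝ → ℝ)
    (hh : ∀ t : ℝ, 0 ≤ t → 0 ≤ h t)
    (hhint : ∀ a b : ℝ, 0 ≤ a → IntervalIntegrable h volume a b)
    (hhbound : ∀ t : ℝ, 0 ≤ t → ∫ s in t..(t + 1), h s ≤ H) :
    ∀ n : ℕ, ∀ t : ℝ, 0 ≤ t → t ≤ n →
      Real.exp (-(ϱ * t)) * ∫ s in (0:ℝ)..t, h s * Real.exp (ϱ * s)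
        ≤ H / (1 - Real.exp (-ϱ)) := by
  have hq1 : Real.exp (-ϱ) < 1 := Real.exp_lt_one_iff.mpr (by linarith)
  have hq0 : 0 < Real.exp (-ϱ) := Real.exp_pos _
  have hden : 0 < 1 - Real.exp (-ϱ) := by linarith
  have hGint : ∀ a b : ℝ, 0 ≤ a →
      IntervalIntegrable (fun s => h s * Real.exp (ϱ * s)) volume a b := by
    intro a b ha
    exact (hhint a b ha).mul_continuousOn (Continuous.continuousOn (by continuity))
  -- pointwise bound lemma
  have hpt : ∀ t s : ℝ, 0 ≤ s → s ≤ t →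
      Real.exp (-(ϱ * t)) * (h s * Real.exp (ϱ * s)) ≤ h s := by
    intro t s hs hst
    have : Real.exp (-(ϱ * t)) * (h s * Real.exp (ϱ * s))
        = h s * Real.exp (ϱ * s - ϱ * t) := by
      rw [Real.exp_sub, Real.exp_neg]
      field_simp
    rw [this]
    have h1 : Real.exp (ϱ * s - ϱ * t) ≤ 1 :=
      Real.exp_le_one_iff.mpr (by nlinarith)
    exact mul_le_of_le_one_right (hh s hs) h1
  have hunit : ∀ a t : ℝ, 0 ≤ a → t = a + 1 →
      Real.exp (-(ϱ * t)) * ∫ s in a..t, h s * Real.exp (ϱ * s) ≤ H := by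
    intro a t ha ht
    rw [← intervalIntegral.integral_const_mul]
    have hmono : (∫ s in a..t, Real.exp (-(ϱ * t)) * (h s * Real.exp (ϱ * s)))
        ≤ ∫ s in a..t, h s := by
      apply intervalIntegral.integral_mono_on (by linarith)
        ((hGint a t ha).const_mul _) (hhint a t ha)
      intro s hs
      exact hpt t s (le_trans ha hs.1) hs.2
    calc (∫ s in a..t, Real.exp (-(ϱ * t)) * (h s * Real.exp (ϱ * s)))
        ≤ ∫ s in a..t, h s := hmono
      _ ≤ H := by rw [ht]; exact hhbound a ha
  intro n
  induction n with
  | zero =>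
      intro t ht ht'
      have : t = 0 := le_antisymm (by exact_mod_cast ht') ht
      subst this
      simp [intervalIntegral.integral_same]
      positivity
  | succ n ih =>
      intro t ht ht'
      by_cases hcase : t ≤ 1
      · -- small t : bound directly by H ≤ H/(1-q)
        have h1 : Real.exp (-(ϱ * t)) * ∫ s in (0:ℝ)..t, h s * Real.exp (ϱ * s)
            ≤ ∫ s in (0:ℝ)..t, h s := by
          rw [← intervalIntegral.integral_const_mul]
          apply intervalIntegral.integral_mono_on ht
            ((hGint 0 t le_rfl).const_mul _) (hhint 0 t le_rfl)
          intro s hs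
          exact hpt t s hs.1 hs.2
        have h2 : (∫ s in (0:ℝ)..t, h s) ≤ ∫ s in (0:ℝ)..1, h s := by
          have hsplit : (∫ s in (0:ℝ)..t, h s) + (∫ s in t..(1:ℝ), h s)
              = ∫ s in (0:ℝ)..1, h s :=
            intervalIntegral.integral_add_adjacent_intervals
              (hhint 0 t le_rfl) (hhint t 1 ht)
          have hnn : 0 ≤ ∫ s in t..(1:ℝ), h s := by
            apply intervalIntegral.integral_nonneg hcase
            intro u hu; exact hh u (le_trans ht hu.1)
          linarith
        have h3 : (∫ s in (0:ℝ)..1, h s) ≤ H := by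
          have := hhbound 0 le_rfl; simpa using this
        have h4 : H ≤ H / (1 - Real.exp (-ϱ)) := by
          rw [le_div_iff₀ hden]; nlinarith
        linarith
      · push_neg at hcase
        have ht1 : 0 ≤ t - 1 := by linarith
        have ht1n : t - 1 ≤ n := by
          have : (t : ℝ) ≤ n + 1 := by exact_mod_cast ht'
          linarith
        have hsplit : (∫ s in (0:ℝ)..(t-1), h s * Real.exp (ϱ * s))
            + (∫ s in (t-1)..t, h s * Real.exp (ϱ * s))
            = ∫ s in (0:ℝ)..t, h s * Real.exp (ϱ * s) :=
          intervalIntegral.integral_add_adjacent_intervals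
            (hGint 0 (t-1) le_rfl) (hGint (t-1) t ht1)
        have hB : Real.exp (-(ϱ * t)) * ∫ s in (0:ℝ)..(t-1), h s * Real.exp (ϱ * s)
            ≤ Real.exp (-ϱ) * (H / (1 - Real.exp (-ϱ))) := by
          have hexp : Real.exp (-(ϱ * t)) = Real.exp (-ϱ) * Real.exp (-(ϱ * (t-1))) := by
            rw [← Real.exp_add]; ring_nf
          rw [hexp, mul_assoc]
          apply mul_le_mul_of_nonneg_left _ hq0.le
          exact ih (t-1) ht1 ht1n
        have hA : Real.exp (-(ϱ * t)) * ∫ s in (t-1)..t, h s * Real.exp (ϱ * s) ≤ H :=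
          hunit (t-1) t ht1 (by ring)
        have hfix : Real.exp (-ϱ) * (H / (1 - Real.exp (-ϱ))) + H
            = H / (1 - Real.exp (-ϱ)) := by
          field_simp
          ring
        have := hsplit
        nlinarith [Real.exp_pos (-(ϱ * t))]

theorem uniform_gronwall_bound
    (ϱ H : ℝ) (hϱ : 0 < ϱ) (hH : 0 ≤ H)
    (y y' h : ℝ → ℝ)
    (hy : ∀ t : ℝ, 0 ≤ t → 0 ≤ y t)
    (hderiv : ∀ t : ℝ, 0 ≤ t → HasDerivAt y (y' t) t)
    (hh : ∀ t : ℝ, 0 ≤ t → 0 ≤ h t)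
    (hhint : ∀ a b : ℝ, 0 ≤ a → IntervalIntegrable h MeasureTheory.volume a b)
    (hhbound : ∀ t : ℝ, 0 ≤ t → ∫ s in t..(t + 1), h s ≤ H)
    (hineq : ∀ᵐ t ∂(MeasureTheory.volume.restrict (Set.Ici (0 : ℝ))),
      y' t + ϱ * y t ≤ h t) :
    ∀ t : ℝ, 0 ≤ t →
      y t ≤ y 0 * Real.exp (-ϱ * t) + H * (1 + 1 / (1 - Real.exp (-ϱ))) := by
  have hq1 : Real.exp (-ϱ) < 1 := Real.exp_lt_one_iff.mpr (by linarith)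
  have hq0 : 0 < Real.exp (-ϱ) := Real.exp_pos _
  have hden : 0 < 1 - Real.exp (-ϱ) := by linarith
  intro t ht
  set z : ℝ → ℝ := fun s => y s * Real.exp (ϱ * s) with hz
  set z' : ℝ → ℝ := fun s => (y' s + ϱ * y s) * Real.exp (ϱ * s) with hz'
  set G : ℝ → ℝ := fun s => h s * Real.exp (ϱ * s) with hG
  have hGint : ∀ a b : ℝ, 0 ≤ a → IntervalIntegrable G MeasureTheory.volume a b := by
    intro a b ha
    exact (hhint a b ha).mul_continuousOn (Continuous.continuousOn (by continuity))
  -- derivative of z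
  have hzderiv : ∀ s : ℝ, 0 ≤ s → HasDerivAt z (z' s) s := by
    intro s hs
    have he : HasDerivAt (fun u : ℝ => Real.exp (ϱ * u)) (ϱ * Real.exp (ϱ * s)) s := by
      have := (Real.hasDerivAt_exp (ϱ * s)).comp s ((hasDerivAt_id s).const_mul ϱ)
      simpa [mul_comm, Function.comp_def] using this
    have := (hderiv s hs).mul he
    exact this.congr_deriv (by simp only [hz']; ring)
  -- a.e. inequality z' ≤ G on Icc 0 t
  have haeIcc : ∀ᵐ s ∂(MeasureTheory.volume.restrict (Set.Icc (0:ℝ) t)), z' s ≤ G s := by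
    have h1 : ∀ᵐ s ∂(MeasureTheory.volume.restrict (Set.Icc (0:ℝ) t)),
        y' s + ϱ * y s ≤ h s :=
      MeasureTheory.ae_restrict_of_ae_restrict_of_subset
        (fun x hx => hx.1) hineq
    have h2 : ∀ᵐ s ∂(MeasureTheory.volume.restrict (Set.Icc (0:ℝ) t)),
        s ∈ Set.Icc (0:ℝ) t :=
      MeasureTheory.ae_restrict_mem measurableSet_Icc
    filter_upwards [h1, h2] with s hs hmem
    have : 0 < Real.exp (ϱ * s) := Real.exp_pos _
    simp only [hz', hG]
    exact mul_le_mul_of_nonneg_right hs this.le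
  set φ : ℝ → ℝ := fun s => max (G s) (z' s) with hφ
  have hφae : φ =ᵐ[MeasureTheory.volume.restrict (Set.Icc (0:ℝ) t)] G := by
    filter_upwards [haeIcc] with s hs
    simp [hφ, max_eq_left hs]
  have hGIntOn : MeasureTheory.IntegrableOn G (Set.Icc (0:ℝ) t) MeasureTheory.volume := by
    have := (hGint 0 t le_rfl)
    rwa [intervalIntegrable_iff_integrableOn_Icc_of_le ht] at this
  have hφint : MeasureTheory.IntegrableOn φ (Set.Icc (0:ℝ) t) MeasureTheory.volume :=
    hGIntOn.congr hφae.symm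
  have hcont : ContinuousOn z (Set.Icc (0:ℝ) t) := by
    intro s hs
    exact ((hzderiv s hs.1).continuousAt).continuousWithinAt
  have hmain : z t - z 0 ≤ ∫ s in (0:ℝ)..t, φ s := by
    apply intervalIntegral.sub_le_integral_of_hasDeriv_right_of_le ht hcont
      (fun x hx => ((hzderiv x hx.1.le).hasDerivWithinAt)) hφint
    intro x hx
    exact le_max_right _ _
  have hφG : (∫ s in (0:ℝ)..t, φ s) = ∫ s in (0:ℝ)..t, G s := by
    apply intervalIntegral.integral_congr_ae
    have h' : ∀ᵐ x ∂MeasureTheory.volume, x ∈ Set.Icc (0:ℝ) t → φ x = G x :=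
      (MeasureTheory.ae_restrict_iff' measurableSet_Icc).mp hφae
    filter_upwards [h'] with s hs hmem
    rw [Set.uIoc_of_le ht] at hmem
    exact hs ⟨hmem.1.le, hmem.2⟩
  rw [hφG] at hmain
  -- so y t ≤ y 0 * e^{-ϱt} + e^{-ϱt} ∫ G
  have hz0 : z 0 = y 0 := by simp [hz]
  have hIbound : Real.exp (-(ϱ * t)) * ∫ s in (0:ℝ)..t, G s
      ≤ H / (1 - Real.exp (-ϱ)) :=
    key_bound ϱ H hϱ hH h hh hhint hhbound ⌈t⌉₊ t ht (Nat.le_ceil t)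
  have hexp : Real.exp (-(ϱ * t)) * Real.exp (ϱ * t) = 1 := by
    rw [← Real.exp_add]; simp
  have hyt : y t = Real.exp (-(ϱ * t)) * z t := by
    simp only [hz]
    rw [show Real.exp (-(ϱ * t)) * (y t * Real.exp (ϱ * t))
      = y t * (Real.exp (-(ϱ * t)) * Real.exp (ϱ * t)) by ring, hexp, mul_one]
  have hfinal : y t ≤ y 0 * Real.exp (-(ϱ * t)) + H / (1 - Real.exp (-ϱ)) := by
    rw [hyt]
    have h1 : Real.exp (-(ϱ * t)) * z t
        ≤ Real.exp (-(ϱ * t)) * (z 0 + ∫ s in (0:ℝ)..t, G s) :=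
      mul_le_mul_of_nonneg_left (by linarith) (Real.exp_pos _).le
    rw [hz0] at h1
    calc Real.exp (-(ϱ * t)) * z t
        ≤ Real.exp (-(ϱ * t)) * (y 0 + ∫ s in (0:ℝ)..t, G s) := h1
      _ = y 0 * Real.exp (-(ϱ * t)) + Real.exp (-(ϱ * t)) * ∫ s in (0:ℝ)..t, G s := by ring
      _ ≤ y 0 * Real.exp (-(ϱ * t)) + H / (1 - Real.exp (-ϱ)) := by linarith
  have hlast : H / (1 - Real.exp (-ϱ)) ≤ H * (1 + 1 / (1 - Real.exp (-ϱ))) := by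
    rw [div_eq_mul_one_div]
    nlinarith [one_div_pos.mpr hden]
  calc y t ≤ y 0 * Real.exp (-(ϱ * t)) + H / (1 - Real.exp (-ϱ)) := hfinal
    _ ≤ y 0 * Real.exp (-ϱ * t) + H * (1 + 1 / (1 - Real.exp (-ϱ))) := by
        rw [neg_mul]; linarith
end
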